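/- Let D be the unique ℚ-linear derivation on the polynomial ring ℚ[x,y,z] with D(x) = xyz, D(y) = yz², D(z) = y²z. Then for every integer n ≥ 1, Dⁿ(x²) = 2x²(y+z)^{n−1} · ∑_{k=1}^{n} A(n,k) y^k z^{n−k+1}, where A(n,k) is the Eulerian number. -/
import Mathlib


/-- The value of the permutation π ∈ S_n at the (0-based) position i, as a natural
number (junk value n outside the range). -/
def permVal {n : ℕ} (π : Equiv.Perm (Fin n)) (i : ℕ) : ℕ :=
  if h : i < n then (π ⟨i, h⟩ : ℕ) else n

/-- The number of descents of π ∈ S_n: the number of indices i ∈ [n-1] with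
π(i) > π(i+1) (here counted with 0-based positions). -/
def desPerm {n : ℕ} (π : Equiv.Perm (Fin n)) : ℕ :=
  ((Finset.range (n - 1)).filter (fun i => permVal π (i+1) < permVal π i)).card

/-- The Eulerian number A(n,k): the number of permutations π ∈ S_n with
des(π) = k - 1. -/
def eulerianNum (n k : ℕ) : ℕ :=
  (Finset.univ.filter (fun π : Equiv.Perm (Fin n) => desPerm π + 1 = k)).card

def desInd {n : ℕ} (σ : Equiv.Perm (Fin n)) (j : ℕ) : ℕ :=
  if permVal σ (j+1) < permVal σ j then 1 else 0

lemma permVal_lt {n : ℕ} (σ : Equiv.Perm (Fin n)) {j : ℕ} (hj : j < n) : permVal σ j < n := by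
  unfold permVal; rw [dif_pos hj]; exact (σ ⟨j, hj⟩).isLt

lemma permVal_le {n : ℕ} (σ : Equiv.Perm (Fin n)) (j : ℕ) : permVal σ j ≤ n := by
  unfold permVal; split
  · exact le_of_lt (Fin.isLt _)
  · exact le_rfl

lemma permVal_eq_of_ge {n : ℕ} (σ : Equiv.Perm (Fin n)) {j : ℕ} (hj : n ≤ j) : permVal σ j = n := by
  unfold permVal; rw [dif_neg (by omega)]

lemma desInd_eq_zero {n : ℕ} (σ : Equiv.Perm (Fin n)) {j : ℕ} (hj : n - 1 ≤ j) :
    desInd σ j = 0 := by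
  unfold desInd
  rw [if_neg]
  rw [permVal_eq_of_ge σ (by omega : n ≤ j + 1)]
  exact not_lt.2 (permVal_le σ j)

lemma des_eq_sum {n : ℕ} (σ : Equiv.Perm (Fin n)) :
    desPerm σ = ∑ j ∈ Finset.range n, desInd σ j := by
  rw [desPerm, Finset.card_filter]
  cases n with
  | zero => simp
  | succ m =>
    rw [Finset.sum_range_succ, desInd_eq_zero σ (by omega : m + 1 - 1 ≤ m)]
    simp only [Nat.add_sub_cancel, add_zero]
    rfl

lemma des_le {n : ℕ} (σ : Equiv.Perm (Fin n)) : desPerm σ ≤ n - 1 := by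
  calc desPerm σ ≤ (Finset.range (n-1)).card := Finset.card_filter_le _ _
  _ = n - 1 := Finset.card_range _

def ins {n : ℕ} (p : Fin (n+1)) (σ : Equiv.Perm (Fin n)) : Equiv.Perm (Fin (n+1)) :=
  (finSuccEquiv' p).trans ((σ.optionCongr).trans finSuccEquivLast.symm)

lemma ins_self {n : ℕ} (p : Fin (n+1)) (σ : Equiv.Perm (Fin n)) :
    ins p σ p = Fin.last n := by simp [ins]

lemma ins_succAbove {n : ℕ} (p : Fin (n+1)) (σ : Equiv.Perm (Fin n)) (i : Fin n) :
    ins p σ (p.succAbove i) = (σ i).castSucc := by simp [ins]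

lemma val_ins {n : ℕ} (p : Fin (n+1)) (σ : Equiv.Perm (Fin n)) (j : ℕ) (hj : j ≤ n) :
    permVal (ins p σ) j =
      if j < (p : ℕ) then permVal σ j
      else if j = (p : ℕ) then n
      else permVal σ (j - 1) := by
  have hj1 : j < n + 1 := by omega
  rcases lt_trichotomy j (p : ℕ) with h | h | h
  · have hjn : j < n := by have := p.isLt; omega
    have hsa : (⟨j, hj1⟩ : Fin (n+1)) = p.succAbove ⟨j, hjn⟩ := by
      rw [Fin.succAbove_of_castSucc_lt]
      · rfl
      · simpa [Fin.lt_def] using h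
    rw [if_pos h]
    unfold permVal
    rw [dif_pos hj1, dif_pos hjn, hsa, ins_succAbove]
    simp
  · have hfin : (⟨j, hj1⟩ : Fin (n+1)) = p := by ext; simpa using h
    rw [if_neg (by omega), if_pos h]
    unfold permVal
    rw [dif_pos hj1, hfin, ins_self]
    simp
  · have hjn : j - 1 < n := by omega
    have hsa : (⟨j, hj1⟩ : Fin (n+1)) = p.succAbove ⟨j - 1, hjn⟩ := by
      rw [Fin.succAbove_of_le_castSucc]
      · ext; simp [Fin.succ]; omega
      · simp [Fin.le_def]; omega
    rw [if_neg (by omega), if_neg (by omega)]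
    unfold permVal
    rw [dif_pos hj1, dif_pos hjn, hsa, ins_succAbove]
    simp

lemma desInd_ins {n : ℕ} (p : Fin (n+1)) (σ : Equiv.Perm (Fin n)) {i : ℕ} (hi : i < n) :
    desInd (ins p σ) i =
      if i + 1 < (p : ℕ) then desInd σ i
      else if i + 1 = (p : ℕ) then 0
      else if i = (p : ℕ) then 1
      else desInd σ (i - 1) := by
  have hq := p.isLt
  rcases lt_trichotomy (i+1) (p : ℕ) with h1 | h1 | h1
  · have e1 : permVal (ins p σ) (i+1) = permVal σ (i+1) := by
      rw [val_ins p σ (i+1) (by omega), if_pos h1]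
    have e2 : permVal (ins p σ) i = permVal σ i := by
      rw [val_ins p σ i (by omega), if_pos (show i < (p:ℕ) by omega)]
    rw [if_pos h1]
    unfold desInd
    rw [e1, e2]
  · have e1 : permVal (ins p σ) (i+1) = n := by
      rw [val_ins p σ (i+1) (by omega), if_neg (show ¬ i + 1 < (p:ℕ) by omega), if_pos h1]
    have e2 : permVal (ins p σ) i = permVal σ i := by
      rw [val_ins p σ i (by omega), if_pos (show i < (p:ℕ) by omega)]
    rw [if_neg (show ¬ i + 1 < (p:ℕ) by omega), if_pos h1]
    unfold desInd
    rw [e1, e2, if_neg (not_lt.2 (le_of_lt (permVal_lt σ hi)))]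
  · rcases eq_or_lt_of_le (Nat.lt_succ_iff.mp h1) with h2 | h2
    · -- p = i
      have e1 : permVal (ins p σ) (i+1) = permVal σ i := by
        rw [val_ins p σ (i+1) (by omega), if_neg (show ¬ i + 1 < (p:ℕ) by omega),
          if_neg (show ¬ i + 1 = (p:ℕ) by omega), Nat.add_sub_cancel]
      have e2 : permVal (ins p σ) i = n := by
        rw [val_ins p σ i (by omega), if_neg (show ¬ i < (p:ℕ) by omega),
          if_pos h2.symm]
      rw [if_neg (show ¬ i + 1 < (p:ℕ) by omega), if_neg (show ¬ i + 1 = (p:ℕ) by omega),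
        if_pos h2.symm]
      unfold desInd
      rw [e1, e2, if_pos (permVal_lt σ hi)]
    · -- p < i
      have e1 : permVal (ins p σ) (i+1) = permVal σ i := by
        rw [val_ins p σ (i+1) (by omega), if_neg (show ¬ i + 1 < (p:ℕ) by omega),
          if_neg (show ¬ i + 1 = (p:ℕ) by omega), Nat.add_sub_cancel]
      have e2 : permVal (ins p σ) i = permVal σ (i-1) := by
        rw [val_ins p σ i (by omega), if_neg (show ¬ i < (p:ℕ) by omega),
          if_neg (show ¬ i = (p:ℕ) by omega)]
      rw [if_neg (show ¬ i + 1 < (p:ℕ) by omega), if_neg (show ¬ i + 1 = (p:ℕ) by omega),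
        if_neg (show ¬ i = (p:ℕ) by omega)]
      unfold desInd
      rw [e1, e2, show i - 1 + 1 = i by omega]

lemma sum_ins_aux (f : ℕ → ℕ) (Q M : ℕ) (hqn : Q + 1 < M + 1) (hf : f M = 0) :
    (∑ i ∈ Finset.range (M+1),
       (if i + 1 < Q + 1 then f i else if i + 1 = Q + 1 then 0 else if i = Q + 1 then 1
        else f (i - 1)))
      + f Q
    = (∑ i ∈ Finset.range (M+1), f i) + 1 := by
  have hQM : Q + 1 ≤ M := by omega
  rw [Finset.range_eq_Ico,
    ← Finset.sum_Ico_consecutive _ (Nat.zero_le (Q+1)) (by omega : Q + 1 ≤ M + 1),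
    ← Finset.sum_Ico_consecutive f (Nat.zero_le (Q+1)) (by omega : Q + 1 ≤ M + 1)]
  have hA : (∑ i ∈ Finset.Ico 0 (Q+1),
       (if i + 1 < Q + 1 then f i else if i + 1 = Q + 1 then 0 else if i = Q + 1 then 1
        else f (i - 1))) = ∑ i ∈ Finset.Ico 0 Q, f i := by
    rw [Finset.sum_Ico_succ_top (Nat.zero_le Q)]
    rw [if_neg (show ¬ Q + 1 < Q + 1 by omega), if_pos rfl, add_zero]
    refine Finset.sum_congr rfl fun i hi => ?_
    rw [Finset.mem_Ico] at hi
    rw [if_pos (by omega)]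
  have hB : (∑ i ∈ Finset.Ico (Q+1) (M+1),
       (if i + 1 < Q + 1 then f i else if i + 1 = Q + 1 then 0 else if i = Q + 1 then 1
        else f (i - 1))) = 1 + ∑ i ∈ Finset.Ico (Q+1) M, f i := by
    rw [Finset.sum_eq_sum_Ico_succ_bot (by omega : Q + 1 < M + 1)]
    rw [if_neg (by omega), if_neg (by omega), if_pos rfl]
    congr 1
    have : ∀ i ∈ Finset.Ico (Q+1+1) (M+1),
        (if i + 1 < Q + 1 then f i else if i + 1 = Q + 1 then 0 else if i = Q + 1 then 1
         else f (i - 1)) = f (i - 1) := by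
      intro i hi
      rw [Finset.mem_Ico] at hi
      rw [if_neg (by omega), if_neg (by omega), if_neg (by omega)]
    rw [Finset.sum_congr rfl this, Finset.sum_Ico_eq_sum_range, Finset.sum_Ico_eq_sum_range,
      show M + 1 - (Q + 1 + 1) = M - (Q + 1) by omega]
    refine Finset.sum_congr rfl fun j _ => ?_
    congr 1
    omega
  have hC : ∑ i ∈ Finset.Ico 0 (Q+1), f i = (∑ i ∈ Finset.Ico 0 Q, f i) + f Q :=
    Finset.sum_Ico_succ_top (Nat.zero_le Q) f
  have hD : ∑ i ∈ Finset.Ico (Q+1) (M+1), f i = (∑ i ∈ Finset.Ico (Q+1) M, f i) + f M :=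
    Finset.sum_Ico_succ_top hQM f
  rw [hA, hB, hC, hD, hf]
  omega

lemma des_ins_add {n : ℕ} (p : Fin (n+1)) (σ : Equiv.Perm (Fin n)) :
    desPerm (ins p σ)
      + (if 0 < (p : ℕ) ∧ (p : ℕ) < n ∧ permVal σ (p : ℕ) < permVal σ ((p : ℕ) - 1)
          then 1 else 0)
      = desPerm σ + (if (p : ℕ) < n then 1 else 0) := by
  have hq := p.isLt
  have hsum : desPerm (ins p σ) = ∑ i ∈ Finset.range n, desInd (ins p σ) i := by
    rw [des_eq_sum]
    rw [Finset.sum_range_succ, desInd_eq_zero (ins p σ) (by omega : (n+1) - 1 ≤ n)]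
    simp
  rw [hsum, Finset.sum_congr rfl (fun i hi => desInd_ins p σ (Finset.mem_range.mp hi)),
    des_eq_sum σ]
  obtain ⟨q, hqd⟩ : ∃ q, (p : ℕ) = q := ⟨_, rfl⟩
  rw [hqd] at hq ⊢
  clear hqd hsum
  rcases Nat.lt_or_ge q n with hqn | hqn
  swap
  · -- q = n
    rw [if_neg (by omega), if_neg (by omega)]
    simp only [add_zero]
    refine Finset.sum_congr rfl fun i hi => ?_
    rw [Finset.mem_range] at hi
    rcases Nat.lt_or_ge (i+1) q with h | h
    · rw [if_pos h]
    · have h1 : i + 1 = q := by omega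
      rw [if_neg (by omega), if_pos h1, desInd_eq_zero σ (by omega : n - 1 ≤ i)]
  · rw [if_pos hqn]
    rcases Nat.eq_zero_or_pos q with hq0 | hq0
    · -- q = 0
      rw [if_neg (by omega)]
      obtain ⟨m, rfl⟩ : ∃ m, n = m + 1 := ⟨n - 1, by omega⟩
      rw [Finset.sum_range_succ']
      have h1 : ∀ i ∈ Finset.range m,
          (if i + 1 + 1 < q then desInd σ (i+1) else if i + 1 + 1 = q then 0
           else if i + 1 = q then 1 else desInd σ (i + 1 - 1)) = desInd σ i := by
        intro i _
        rw [if_neg (by omega), if_neg (by omega), if_neg (by omega), Nat.add_sub_cancel]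
      rw [Finset.sum_congr rfl h1,
        if_neg (show ¬ 0 + 1 < q by omega), if_neg (show ¬ 0 + 1 = q by omega),
        if_pos (show 0 = q by omega), add_zero,
        Finset.sum_range_succ (fun j => desInd σ j) m,
        desInd_eq_zero σ (by omega : m + 1 - 1 ≤ m), add_zero]
    · -- 1 ≤ q
      have hR : (if 0 < q ∧ q < n ∧ permVal σ q < permVal σ (q - 1) then 1 else 0)
          = desInd σ (q-1) := by
        unfold desInd
        rw [show q - 1 + 1 = q from by omega]
        by_cases hX : permVal σ q < permVal σ (q - 1)
        · rw [if_pos ⟨hq0, hqn, hX⟩, if_pos hX]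
        · rw [if_neg (fun h => hX h.2.2), if_neg hX]
      rw [hR]
      obtain ⟨Q, rfl⟩ : ∃ Q, q = Q + 1 := ⟨q - 1, by omega⟩
      obtain ⟨M, rfl⟩ : ∃ M, n = M + 1 := ⟨n - 1, by omega⟩
      have := sum_ins_aux (fun j => desInd σ j) Q M (by omega)
        (desInd_eq_zero σ (by omega : M + 1 - 1 ≤ M))
      simpa using this

lemma des_ins_cases {n : ℕ} (p : Fin (n+1)) (σ : Equiv.Perm (Fin n)) :
    desPerm (ins p σ) = desPerm σ ∨ desPerm (ins p σ) = desPerm σ + 1 := by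
  have h := des_ins_add p σ
  split_ifs at h <;> omega

lemma des_ins_iff {n : ℕ} (p : Fin (n+1)) (σ : Equiv.Perm (Fin n)) :
    desPerm (ins p σ) = desPerm σ ↔
      ((p : ℕ) = n ∨ (0 < (p : ℕ) ∧ permVal σ (p : ℕ) < permVal σ ((p : ℕ) - 1))) := by
  have h := des_ins_add p σ
  have hq := p.isLt
  by_cases hB : (p : ℕ) < n
  · by_cases hA : 0 < (p : ℕ) ∧ (p : ℕ) < n ∧ permVal σ (p : ℕ) < permVal σ ((p : ℕ) - 1)
    · rw [if_pos hA, if_pos hB] at h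
      exact ⟨fun _ => Or.inr ⟨hA.1, hA.2.2⟩, fun _ => by omega⟩
    · rw [if_neg hA, if_pos hB] at h
      constructor
      · intro he; omega
      · rintro (he | ⟨h0, hX⟩)
        · omega
        · exact absurd ⟨h0, hB, hX⟩ hA
  · have hA : ¬ (0 < (p : ℕ) ∧ (p : ℕ) < n ∧ permVal σ (p : ℕ) < permVal σ ((p : ℕ) - 1)) :=
      fun hA => hB hA.2.1
    rw [if_neg hA, if_neg hB] at h
    exact ⟨fun _ => Or.inl (by omega), fun _ => by omega⟩

lemma card_stay {n : ℕ} (hn : 1 ≤ n) (σ : Equiv.Perm (Fin n)) :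
    (Finset.univ.filter (fun p : Fin (n+1) => desPerm (ins p σ) = desPerm σ)).card
      = desPerm σ + 1 := by
  rw [Finset.filter_congr (fun p _ => des_ins_iff p σ)]
  rw [Finset.card_filter]
  rw [Fin.sum_univ_eq_sum_range
    (fun q => if q = n ∨ (0 < q ∧ permVal σ q < permVal σ (q - 1)) then 1 else 0) (n+1)]
  rw [Finset.sum_range_succ, if_pos (Or.inl rfl)]
  obtain ⟨m, rfl⟩ : ∃ m, n = m + 1 := ⟨n - 1, by omega⟩
  rw [Finset.sum_range_succ']
  have h1 : ∀ j ∈ Finset.range m,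
      (if j + 1 = m + 1 ∨ (0 < j + 1 ∧ permVal σ (j+1) < permVal σ (j + 1 - 1)) then 1 else 0)
        = desInd σ j := by
    intro j hj
    rw [Finset.mem_range] at hj
    unfold desInd
    rw [Nat.add_sub_cancel]
    by_cases hX : permVal σ (j+1) < permVal σ j
    · rw [if_pos (Or.inr ⟨by omega, hX⟩), if_pos hX]
    · have hcond : ¬ (j + 1 = m + 1 ∨ (0 < j + 1 ∧ permVal σ (j+1) < permVal σ j)) := by
        rintro (h | ⟨_, h⟩)
        · omega
        · exact hX h
      rw [if_neg hcond, if_neg hX]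
  rw [Finset.sum_congr rfl h1, if_neg (by rintro (h | ⟨h, _⟩) <;> omega)]
  rw [des_eq_sum, Finset.sum_range_succ, desInd_eq_zero σ (by omega : m + 1 - 1 ≤ m), add_zero]

lemma card_incr {n : ℕ} (hn : 1 ≤ n) (σ : Equiv.Perm (Fin n)) :
    (Finset.univ.filter (fun p : Fin (n+1) => ¬ desPerm (ins p σ) = desPerm σ)).card
      = n - desPerm σ := by
  have h := Finset.card_filter_add_card_filter_not
    (s := (Finset.univ : Finset (Fin (n+1))))
    (p := fun p => desPerm (ins p σ) = desPerm σ)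
  rw [card_stay hn σ] at h
  have hcard : (Finset.univ : Finset (Fin (n+1))).card = n + 1 := by simp
  have hle : desPerm σ ≤ n - 1 := des_le σ
  omega

lemma ins_injective {n : ℕ} :
    Function.Injective (fun pq : Equiv.Perm (Fin n) × Fin (n+1) => ins pq.2 pq.1) := by
  rintro ⟨σ, p⟩ ⟨σ', p'⟩ h
  simp only at h
  have hp : p = p' := by
    have h1 : ins p σ p = Fin.last n := ins_self p σ
    have h2 : ins p σ p' = Fin.last n := by rw [h]; exact ins_self p' σ'
    exact (ins p σ).injective (h1.trans h2.symm)
  subst hp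
  have hσ : σ = σ' := by
    ext i
    have h1 := ins_succAbove p σ i
    rw [h] at h1
    rw [ins_succAbove] at h1
    exact congrArg Fin.val (Fin.castSucc_injective n h1.symm)
  simp [hσ]

lemma ins_bijective {n : ℕ} :
    Function.Bijective (fun pq : Equiv.Perm (Fin n) × Fin (n+1) => ins pq.2 pq.1) := by
  rw [Fintype.bijective_iff_injective_and_card]
  refine ⟨ins_injective, ?_⟩
  simp [Fintype.card_perm, Nat.factorial_succ, mul_comm]

lemma keysum {R : Type*} [CommSemiring R] (Y Z : R) {n : ℕ} (hn : 1 ≤ n) :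
    ∑ π : Equiv.Perm (Fin (n+1)), Y ^ desPerm π * Z ^ (n - desPerm π)
      = ∑ σ : Equiv.Perm (Fin n),
          ((desPerm σ + 1) • (Y ^ desPerm σ * Z ^ (n - desPerm σ))
            + (n - desPerm σ) • (Y ^ (desPerm σ + 1) * Z ^ (n - 1 - desPerm σ))) := by
  have hb := Fintype.sum_bijective _ (ins_bijective (n := n))
    (fun pq : Equiv.Perm (Fin n) × Fin (n+1) =>
      Y ^ desPerm (ins pq.2 pq.1) * Z ^ (n - desPerm (ins pq.2 pq.1)))
    (fun π => Y ^ desPerm π * Z ^ (n - desPerm π)) (fun _ => rfl)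
  rw [← hb, Fintype.sum_prod_type]
  refine Finset.sum_congr rfl fun σ _ => ?_
  have hpt : ∀ p : Fin (n+1),
      Y ^ desPerm (ins p σ) * Z ^ (n - desPerm (ins p σ))
        = if desPerm (ins p σ) = desPerm σ
          then Y ^ desPerm σ * Z ^ (n - desPerm σ)
          else Y ^ (desPerm σ + 1) * Z ^ (n - 1 - desPerm σ) := by
    intro p
    rcases des_ins_cases p σ with h | h
    · rw [if_pos h, h]
    · rw [if_neg (by omega), h, show n - (desPerm σ + 1) = n - 1 - desPerm σ from by omega]
  rw [Finset.sum_congr rfl (fun p _ => hpt p), Finset.sum_ite, Finset.sum_const,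
    Finset.sum_const, card_stay hn σ, card_incr hn σ]

section Poly
open MvPolynomial

local notation "P3" => MvPolynomial (Fin 3) ℚ

lemma D_two (D : Derivation ℚ P3 P3) : D (2 : P3) = 0 := by
  have h : (2 : P3) = algebraMap ℚ P3 2 := (map_ofNat (algebraMap ℚ P3) 2).symm
  rw [h, Derivation.map_algebraMap]

lemma D_YZ (D : Derivation ℚ P3 P3)
    (hy : D (X 1) = X 1 * X 2 ^ 2) (hz : D (X 2) = X 1 ^ 2 * X 2) (a b : ℕ) :
    D (X 1 ^ (a+1) * X 2 ^ (b+1))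
      = (a+1) • (X 1 ^ (a+1) * X 2 ^ (b+3)) + (b+1) • (X 1 ^ (a+3) * X 2 ^ (b+1)) := by
  rw [Derivation.leibniz, Derivation.leibniz_pow, Derivation.leibniz_pow, hy, hz]
  simp only [Nat.add_sub_cancel, smul_eq_mul, nsmul_eq_mul]
  push_cast
  ring

lemma D_W (D : Derivation ℚ P3 P3)
    (hy : D (X 1) = X 1 * X 2 ^ 2) (hz : D (X 2) = X 1 ^ 2 * X 2) (k : ℕ) :
    D ((X 1 + X 2) ^ k) = k • ((X 1 + X 2) ^ k * (X 1 * X 2)) := by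
  rw [Derivation.leibniz_pow, map_add, hy, hz]
  cases k with
  | zero => simp
  | succ j =>
    simp only [Nat.add_sub_cancel, smul_eq_mul, nsmul_eq_mul]
    push_cast
    ring

lemma D_X0sq (D : Derivation ℚ P3 P3) (hx : D (X 0) = X 0 * X 1 * X 2) :
    D (X 0 ^ 2) = 2 * (X 0 ^ 2 * (X 1 * X 2)) := by
  rw [Derivation.leibniz_pow, hx]
  norm_num
  ring

lemma icc_eq_permSum (n : ℕ) (hn : 1 ≤ n) :
    ∑ k ∈ Finset.Icc 1 n, C ((eulerianNum n k : ℚ)) * X 1 ^ k * X 2 ^ (n - k + 1)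
      = ∑ π : Equiv.Perm (Fin n), (X 1 : P3) ^ (desPerm π + 1) * X 2 ^ (n - desPerm π) := by
  have hmaps : ∀ π : Equiv.Perm (Fin n), π ∈ Finset.univ → desPerm π + 1 ∈ Finset.Icc 1 n :=
    fun π _ => Finset.mem_Icc.2 ⟨by omega, by have := des_le π; omega⟩
  rw [← Finset.sum_fiberwise_of_maps_to hmaps
    (fun π => (X 1 : P3) ^ (desPerm π + 1) * X 2 ^ (n - desPerm π))]
  refine Finset.sum_congr rfl fun j hj => ?_
  rw [Finset.mem_Icc] at hj
  have h1 : ∀ π ∈ Finset.univ.filter (fun π : Equiv.Perm (Fin n) => desPerm π + 1 = j),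
      (X 1 : P3) ^ (desPerm π + 1) * X 2 ^ (n - desPerm π)
        = X 1 ^ j * X 2 ^ (n - j + 1) := by
    intro π hπ
    have hd := (Finset.mem_filter.mp hπ).2
    have hdl := des_le π
    rw [hd, show n - desPerm π = n - j + 1 from by omega]
  rw [Finset.sum_congr rfl h1, Finset.sum_const,
    show (Finset.univ.filter (fun π : Equiv.Perm (Fin n) => desPerm π + 1 = j)).card
      = eulerianNum n j from rfl,
    nsmul_eq_mul, ← map_natCast (C : ℚ →+* P3) (eulerianNum n j), mul_assoc]

end Poly

open MvPolynomial in
/-- If D is the (unique) ℚ-linear derivation on ℚ[x,y,z] with D(x) = xyz,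
D(y) = yz², D(z) = y²z, then for n ≥ 1,
Dⁿ(x²) = 2x²(y+z)^(n-1) · ∑_(k=1)^(n) A(n,k) y^k z^(n-k+1). -/
theorem stmt9 (D : Derivation ℚ (MvPolynomial (Fin 3) ℚ) (MvPolynomial (Fin 3) ℚ))
    (hx : D (X 0) = X 0 * X 1 * X 2)
    (hy : D (X 1) = X 1 * X 2 ^ 2)
    (hz : D (X 2) = X 1 ^ 2 * X 2)
    (n : ℕ) (hn : 1 ≤ n) :
    (⇑D)^[n] (X 0 ^ 2)
      = 2 * X 0 ^ 2 * (X 1 + X 2) ^ (n - 1) * ∑ k ∈ Finset.Icc 1 n,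
          C ((eulerianNum n k : ℚ)) * X 1 ^ k * X 2 ^ (n - k + 1) := by
  have key : ∀ m : ℕ, (⇑D)^[m+1] (X 0 ^ 2)
      = 2 * X 0 ^ 2 * (X 1 + X 2) ^ m
        * ∑ π : Equiv.Perm (Fin (m+1)), X 1 ^ (desPerm π + 1) * X 2 ^ (m + 1 - desPerm π) := by
    intro m
    induction m with
    | zero =>
      rw [Function.iterate_one]
      have hsum : (∑ π : Equiv.Perm (Fin (0+1)),
            (X 1 : MvPolynomial (Fin 3) ℚ) ^ (desPerm π + 1) * X 2 ^ (0 + 1 - desPerm π))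
          = X 1 * X 2 := by
        haveI : Subsingleton (Equiv.Perm (Fin 1)) :=
          ⟨fun a b => Equiv.ext fun i => Subsingleton.elim _ _⟩
        rw [Fintype.sum_subsingleton _ (1 : Equiv.Perm (Fin (0+1)))]
        have h0 : desPerm (1 : Equiv.Perm (Fin 1)) = 0 := by simp [desPerm]
        rw [h0]
        norm_num
      rw [hsum, D_X0sq D hx, pow_zero]
      ring
    | succ k ih =>
      rw [Function.iterate_succ_apply', ih]
      have hDS : D (∑ π : Equiv.Perm (Fin (k+1)),
            (X 1 : MvPolynomial (Fin 3) ℚ) ^ (desPerm π + 1) * X 2 ^ (k + 1 - desPerm π))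
          = ∑ π : Equiv.Perm (Fin (k+1)),
              ((desPerm π + 1) • ((X 1 : MvPolynomial (Fin 3) ℚ) ^ (desPerm π + 1)
                  * X 2 ^ ((k - desPerm π) + 3))
                + ((k - desPerm π) + 1) • (X 1 ^ (desPerm π + 3)
                  * X 2 ^ ((k - desPerm π) + 1))) := by
        rw [map_sum]
        refine Finset.sum_congr rfl fun π _ => ?_
        have hd : desPerm π ≤ k := by have := des_le π; omega
        rw [show k + 1 - desPerm π = (k - desPerm π) + 1 from by omega]
        exact D_YZ D hy hz (desPerm π) (k - desPerm π)
      have hS' : (∑ π : Equiv.Perm (Fin (k+1+1)),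
            (X 1 : MvPolynomial (Fin 3) ℚ) ^ (desPerm π + 1) * X 2 ^ (k + 1 + 1 - desPerm π))
          = X 1 * X 2 * ∑ π : Equiv.Perm (Fin (k+1+1)),
              (X 1 : MvPolynomial (Fin 3) ℚ) ^ desPerm π * X 2 ^ (k + 1 - desPerm π) := by
        rw [Finset.mul_sum]
        refine Finset.sum_congr rfl fun π _ => ?_
        have hd : desPerm π ≤ k + 1 := by have := des_le π; omega
        rw [pow_succ, show k + 1 + 1 - desPerm π = ((k + 1) - desPerm π) + 1 from by omega,
          pow_succ]
        ring
      have hkey := keysum (X 1 : MvPolynomial (Fin 3) ℚ) (X 2) (show 1 ≤ k + 1 by omega)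
      have central : (X 1 + X 2) * (∑ π : Equiv.Perm (Fin (k+1+1)),
            (X 1 : MvPolynomial (Fin 3) ℚ) ^ (desPerm π + 1) * X 2 ^ (k + 1 + 1 - desPerm π))
          = (k+2) • (X 1 * X 2 * ∑ π : Equiv.Perm (Fin (k+1)),
                (X 1 : MvPolynomial (Fin 3) ℚ) ^ (desPerm π + 1) * X 2 ^ (k + 1 - desPerm π))
            + ∑ π : Equiv.Perm (Fin (k+1)),
              ((desPerm π + 1) • ((X 1 : MvPolynomial (Fin 3) ℚ) ^ (desPerm π + 1)
                  * X 2 ^ ((k - desPerm π) + 3))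
                + ((k - desPerm π) + 1) • (X 1 ^ (desPerm π + 3)
                  * X 2 ^ ((k - desPerm π) + 1))) := by
        rw [hS', hkey, Finset.mul_sum, Finset.mul_sum, Finset.mul_sum, Finset.smul_sum,
          ← Finset.sum_add_distrib]
        refine Finset.sum_congr rfl fun σ _ => ?_
        have hd : desPerm σ ≤ k := by have := des_le σ; omega
        rw [show k + 1 - desPerm σ = (k - desPerm σ) + 1 from by omega,
          show k + 1 - 1 - desPerm σ = k - desPerm σ from by omega,
          show (k + 2 : ℕ) = desPerm σ + (k - desPerm σ) + 2 from by omega]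
        simp only [smul_eq_mul, nsmul_eq_mul]
        push_cast
        ring
      have hRHS : 2 * X 0 ^ 2 * (X 1 + X 2) ^ (k + 1)
            * (∑ π : Equiv.Perm (Fin (k+1+1)),
                (X 1 : MvPolynomial (Fin 3) ℚ) ^ (desPerm π + 1) * X 2 ^ (k + 1 + 1 - desPerm π))
          = 2 * X 0 ^ 2 * (X 1 + X 2) ^ k
            * ((k+2) • (X 1 * X 2 * ∑ π : Equiv.Perm (Fin (k+1)),
                  (X 1 : MvPolynomial (Fin 3) ℚ) ^ (desPerm π + 1) * X 2 ^ (k + 1 - desPerm π))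
              + ∑ π : Equiv.Perm (Fin (k+1)),
                ((desPerm π + 1) • ((X 1 : MvPolynomial (Fin 3) ℚ) ^ (desPerm π + 1)
                    * X 2 ^ ((k - desPerm π) + 3))
                  + ((k - desPerm π) + 1) • (X 1 ^ (desPerm π + 3)
                    * X 2 ^ ((k - desPerm π) + 1)))) := by
        rw [← central, pow_succ]
        ring
      rw [show k + 1 + 1 = k + 1 + 1 from rfl]
      rw [Derivation.leibniz, Derivation.leibniz, Derivation.leibniz, hDS,
        D_X0sq D hx, D_W D hy hz, D_two D, hRHS]
      simp only [smul_eq_mul, nsmul_eq_mul]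
      push_cast
      ring
  obtain ⟨m, rfl⟩ : ∃ m, n = m + 1 := ⟨n - 1, by omega⟩
  rw [key m, Nat.add_sub_cancel, icc_eq_permSum (m+1) (by omega)]
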